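/- If G is a graph on n vertices without isolated vertices, then γ(G) ≤ m_G[2,n], the number of Laplacian eigenvalues of G in the interval [2,n]. -/

import Mathlib

open scoped Classical

/-- The `i`-th Laplacian eigenvalue of `G` (in the unsorted indexing given by
the spectral theorem applied to the Laplacian matrix). -/
noncomputable def lapEig {V : Type*} [Fintype V] [DecidableEq V] (G : SimpleGraph V) : V → ℝ :=
  (G.posSemidef_lapMatrix (R := ℝ)).isHermitian.eigenvalues

/-- The number of Laplacian eigenvalues of `G` (with multiplicity) satisfying `P`. -/
noncomputable def mCount {V : Type*} [Fintype V] [DecidableEq V] (G : SimpleGraph V)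
    (P : ℝ → Prop) : ℕ :=
  (Finset.univ.filter fun i => P (lapEig G i)).card

/-- `S` is a dominating set of `G`. -/
def IsDomSet {V : Type*} (G : SimpleGraph V) (S : Finset V) : Prop :=
  ∀ v ∉ S, ∃ u ∈ S, G.Adj u v

/-- The domination number of `G`. -/
noncomputable def domNum {V : Type*} [Fintype V] (G : SimpleGraph V) : ℕ :=
  sInf {k | ∃ S : Finset V, IsDomSet G S ∧ S.card = k}

section Aux
open Matrix Finset

lemma quadform_decomp {V : Type*} [Fintype V] [DecidableEq V] (A : Matrix V V ℝ) (hA : A.IsHermitian)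
    (x : V → ℝ) :
    x ⬝ᵥ (A *ᵥ x) = ∑ i, hA.eigenvalues i * ((⇑(hA.eigenvectorBasis i)) ⬝ᵥ x)^2 := by
  conv_lhs => rw [hA.spectral_theorem, Unitary.conjStarAlgAut_apply]
  rw [← mulVec_mulVec, ← mulVec_mulVec, dotProduct_mulVec x]
  have hU : vecMul x (hA.eigenvectorUnitary : Matrix V V ℝ)
      = fun i => (⇑(hA.eigenvectorBasis i)) ⬝ᵥ x := by
    ext i
    simp [vecMul, dotProduct, mul_comm]
  have hS : (star (hA.eigenvectorUnitary : Matrix V V ℝ)) *ᵥ x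
      = fun i => (⇑(hA.eigenvectorBasis i)) ⬝ᵥ x := by
    ext i
    simp [mulVec, dotProduct, star_apply]
  rw [hU, hS]
  simp only [mulVec_diagonal, dotProduct, Function.comp, RCLike.ofReal_real_eq_id, id]
  congr 1; ext i; ring

lemma dot_self_decomp {V : Type*} [Fintype V] [DecidableEq V] {A : Matrix V V ℝ} (hA : A.IsHermitian)
    (x : V → ℝ) :
    x ⬝ᵥ x = ∑ i, ((⇑(hA.eigenvectorBasis i)) ⬝ᵥ x)^2 := by
  have h1 : (1 : Matrix V V ℝ) = (hA.eigenvectorUnitary : Matrix V V ℝ) * (star (hA.eigenvectorUnitary : Matrix V V ℝ)) := by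
    have hm := hA.eigenvectorUnitary.2
    rw [Unitary.mem_iff] at hm
    exact hm.2.symm
  calc x ⬝ᵥ x = x ⬝ᵥ ((1 : Matrix V V ℝ) *ᵥ x) := by rw [one_mulVec]
    _ = ∑ i, ((⇑(hA.eigenvectorBasis i)) ⬝ᵥ x)^2 := by
        rw [h1, ← mulVec_mulVec, dotProduct_mulVec x]
        have hU : vecMul x (hA.eigenvectorUnitary : Matrix V V ℝ)
            = fun i => (⇑(hA.eigenvectorBasis i)) ⬝ᵥ x := by
          ext i
          simp [vecMul, dotProduct, mul_comm]
        have hS : (star (hA.eigenvectorUnitary : Matrix V V ℝ)) *ᵥ x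
            = fun i => (⇑(hA.eigenvectorBasis i)) ⬝ᵥ x := by
          ext i
          simp [mulVec, dotProduct, star_apply]
        rw [hU, hS]
        simp [dotProduct, sq]

/-- If there is a `k`-dim family of vectors on whose span the quadratic form is `≥ c‖x‖²`,
then at least `k` eigenvalues are `≥ c`. -/
lemma card_le_count_eigen {V : Type*} [Fintype V] [DecidableEq V] (A : Matrix V V ℝ)
    (hA : A.IsHermitian) (c : ℝ) {ι : Type*} [Fintype ι] (w : ι → V → ℝ)
    (hindep : ∀ t : ι → ℝ, t ≠ 0 → (fun v => ∑ j, t j * w j v) ≠ 0)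
    (hQ : ∀ t : ι → ℝ,
      c * ((fun v => ∑ j, t j * w j v) ⬝ᵥ (fun v => ∑ j, t j * w j v))
        ≤ (fun v => ∑ j, t j * w j v) ⬝ᵥ (A *ᵥ (fun v => ∑ j, t j * w j v))) :
    Fintype.card ι ≤ (Finset.univ.filter fun i => c ≤ hA.eigenvalues i).card := by
  by_contra hlt
  push_neg at hlt
  -- linear map t ↦ (b_i ⬝ᵥ x_t) for i in the filter
  set S : Finset V := Finset.univ.filter fun i => c ≤ hA.eigenvalues i with hS
  let T : (ι → ℝ) →ₗ[ℝ] (S → ℝ) :=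
    { toFun := fun t i => (⇑(hA.eigenvectorBasis i.1)) ⬝ᵥ (fun v => ∑ j, t j * w j v)
      map_add' := by
        intro t s; ext i; simp [dotProduct, mul_add, add_mul, Finset.sum_add_distrib]
      map_smul' := by
        intro r t; ext i
        simp only [dotProduct, RingHom.id_apply, Pi.smul_apply, smul_eq_mul]
        rw [Finset.mul_sum]
        refine Finset.sum_congr rfl fun v _ => ?_
        simp only [Finset.mul_sum]
        exact Finset.sum_congr rfl fun j _ => by ring }
  have hnotinj : ¬ Function.Injective T := by
    intro hinj
    have := LinearMap.finrank_le_finrank_of_injective hinj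
    simp only [Module.finrank_pi] at this
    have hcS : Fintype.card S = S.card := Fintype.card_coe S
    omega
  rw [injective_iff_map_eq_zero'] at hnotinj
  push_neg at hnotinj
  obtain ⟨t, ht⟩ := hnotinj
  rcases ht with ⟨ht0, htne⟩ | ⟨htne, ht0⟩
  swap
  · rw [ht0, map_zero] at htne; exact htne rfl
  set x : V → ℝ := fun v => ∑ j, t j * w j v with hx
  have hxne : x ≠ 0 := hindep t htne
  have ha : ∀ i ∈ S, (⇑(hA.eigenvectorBasis i)) ⬝ᵥ x = 0 := by
    intro i hi
    exact congrFun ht0 ⟨i, hi⟩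
  set Sc : Finset V := Finset.univ.filter (fun i => ¬ c ≤ hA.eigenvalues i) with hSc
  have hsplit : ∀ f : V → ℝ, ∑ i, f i = ∑ i ∈ S, f i + ∑ i ∈ Sc, f i := by
    intro f
    exact (Finset.sum_filter_add_sum_filter_not _ _ f).symm
  have hQdec : x ⬝ᵥ (A *ᵥ x) = ∑ i ∈ Sc, hA.eigenvalues i * ((⇑(hA.eigenvectorBasis i)) ⬝ᵥ x)^2 := by
    rw [quadform_decomp A hA x, hsplit]
    rw [Finset.sum_eq_zero (fun i hi => by rw [ha i hi]; ring), zero_add]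
  have hndec : x ⬝ᵥ x = ∑ i ∈ Sc, ((⇑(hA.eigenvectorBasis i)) ⬝ᵥ x)^2 := by
    rw [dot_self_decomp hA x, hsplit]
    rw [Finset.sum_eq_zero (fun i hi => by rw [ha i hi]; ring), zero_add]
  have hpos : 0 < x ⬝ᵥ x := by
    rcases lt_or_eq_of_le (Finset.sum_nonneg (fun v _ => mul_self_nonneg (x v)) :
      (0:ℝ) ≤ x ⬝ᵥ x) with hp | hp
    · exact hp
    · exact absurd ((dotProduct_self_eq_zero).mp hp.symm) hxne
  have hwit : ∃ i ∈ Sc, ((⇑(hA.eigenvectorBasis i)) ⬝ᵥ x) ≠ 0 := by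
    by_contra hall
    push_neg at hall
    rw [hndec] at hpos
    rw [Finset.sum_eq_zero (fun i hi => by rw [hall i hi]; ring)] at hpos
    exact lt_irrefl _ hpos
  obtain ⟨i0, hi0, hai0⟩ := hwit
  have hstrict : ∑ i ∈ Sc, hA.eigenvalues i * ((⇑(hA.eigenvectorBasis i)) ⬝ᵥ x)^2
      < ∑ i ∈ Sc, c * ((⇑(hA.eigenvectorBasis i)) ⬝ᵥ x)^2 := by
    apply Finset.sum_lt_sum
    · intro i hi
      have hlt' : hA.eigenvalues i < c := by
        simp only [hSc, Finset.mem_filter] at hi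
        exact lt_of_not_ge hi.2
      exact mul_le_mul_of_nonneg_right hlt'.le (sq_nonneg _)
    · refine ⟨i0, hi0, ?_⟩
      have hlt' : hA.eigenvalues i0 < c := by
        simp only [hSc, Finset.mem_filter] at hi0
        exact lt_of_not_ge hi0.2
      exact mul_lt_mul_of_pos_right hlt' (by positivity)
  have hQx := hQ t
  rw [← hx] at hQx
  rw [hQdec] at hQx
  rw [← Finset.mul_sum, ← hndec] at hstrict
  linarith

lemma lap_quad_eq {n : ℕ} (G : SimpleGraph (Fin n)) (x : Fin n → ℝ) :
    x ⬝ᵥ (G.lapMatrix ℝ *ᵥ x) =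
      (∑ i, ∑ j, if G.Adj i j then (x i - x j)^2 else 0) / 2 := by
  rw [← Matrix.toLinearMap₂'_apply', SimpleGraph.lapMatrix_toLinearMap₂']

lemma lap_quad_le {n : ℕ} (G : SimpleGraph (Fin n)) (x : Fin n → ℝ) :
    x ⬝ᵥ (G.lapMatrix ℝ *ᵥ x) ≤ (n : ℝ) * (x ⬝ᵥ x) := by
  rw [lap_quad_eq]
  have h2 : (∑ i, ∑ j, if G.Adj i j then (x i - x j)^2 else 0)
      ≤ ∑ i, ∑ j, (x i - x j)^2 := by
    apply Finset.sum_le_sum; intro i _; apply Finset.sum_le_sum; intro j _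
    split
    · exact le_refl _
    · positivity
  have h3 : ∑ i, ∑ j : Fin n, (x i - x j)^2
      = 2 * n * (∑ i, x i ^2) - 2 * (∑ i, x i)^2 := by
    have hrow : ∀ i : Fin n, ∑ j, (x i - x j)^2
        = n * x i ^2 - 2 * x i * (∑ j, x j) + ∑ j, x j ^2 := by
      intro i
      simp only [sub_sq, Finset.sum_add_distrib, Finset.sum_sub_distrib, Finset.mul_sum,
        Finset.sum_const, Finset.card_univ, Fintype.card_fin, nsmul_eq_mul]
    have hx2 : ∑ i, 2 * x i * (∑ j, x j) = 2 * (∑ j, x j)^2 := by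
      rw [← Finset.sum_mul, ← Finset.mul_sum]
      ring
    simp only [hrow]
    rw [Finset.sum_add_distrib, Finset.sum_sub_distrib, hx2, ← Finset.mul_sum,
      Finset.sum_const, Finset.card_univ, Fintype.card_fin, nsmul_eq_mul]
    ring
  have h4 : x ⬝ᵥ x = ∑ i, x i ^2 := by
    simp [dotProduct, sq]
  rw [h4]
  nlinarith [sq_nonneg (∑ i, x i)]

lemma basis_dot_self {V : Type*} [Fintype V] [DecidableEq V] {A : Matrix V V ℝ}
    (hA : A.IsHermitian) (i : V) :
    (⇑(hA.eigenvectorBasis i)) ⬝ᵥ (⇑(hA.eigenvectorBasis i)) = 1 := by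
  have h2 : (inner ℝ (hA.eigenvectorBasis i) (hA.eigenvectorBasis i) : ℝ) = 1 := by
    rw [real_inner_self_eq_norm_sq, hA.eigenvectorBasis.orthonormal.1 i]
    norm_num
  rw [← h2, PiLp.inner_apply]
  simp [dotProduct, sq]

lemma lapEig_nonneg {n : ℕ} (G : SimpleGraph (Fin n)) (i : Fin n) : 0 ≤ lapEig G i :=
  (G.posSemidef_lapMatrix (R := ℝ)).eigenvalues_nonneg i

lemma lapEig_le {n : ℕ} (G : SimpleGraph (Fin n)) (i : Fin n) : lapEig G i ≤ (n : ℝ) := by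
  set hH := (G.posSemidef_lapMatrix (R := ℝ)).isHermitian with hHdef
  set b : Fin n → ℝ := ⇑(hH.eigenvectorBasis i) with hb
  have hv : G.lapMatrix ℝ *ᵥ b = lapEig G i • b := hH.mulVec_eigenvectorBasis i
  have h1 : b ⬝ᵥ (G.lapMatrix ℝ *ᵥ b) = lapEig G i := by
    rw [hv, dotProduct_smul, smul_eq_mul, basis_dot_self hH i]
    ring
  have h2 := lap_quad_le G b
  rw [h1, basis_dot_self hH i] at h2
  simpa using h2

variable {n : ℕ} (G : SimpleGraph (Fin n))

/-- matchings encoded as finsets of ordered pairs -/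
def IsM (M : Finset (Fin n × Fin n)) : Prop :=
  (∀ p ∈ M, G.Adj p.1 p.2) ∧
  ∀ p ∈ M, ∀ q ∈ M, (p.1 = q.1 ∨ p.1 = q.2 ∨ p.2 = q.1 ∨ p.2 = q.2) → p = q

def mV (M : Finset (Fin n × Fin n)) : Finset (Fin n) := M.biUnion fun p => {p.1, p.2}

lemma mem_mV {M : Finset (Fin n × Fin n)} {v : Fin n} :
    v ∈ mV M ↔ ∃ p ∈ M, v = p.1 ∨ v = p.2 := by
  simp [mV, Finset.mem_biUnion]

lemma exists_max_matching :
    ∃ M : Finset (Fin n × Fin n), IsM G M ∧ ∀ M', IsM G M' → M'.card ≤ M.card := by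
  obtain ⟨M, hM, hmax⟩ := Finset.exists_max_image
    (Finset.univ.filter fun M : Finset (Fin n × Fin n) => IsM G M) Finset.card
    ⟨∅, by simp [IsM]⟩
  refine ⟨M, (Finset.mem_filter.mp hM).2, fun M' hM' => hmax M' (Finset.mem_filter.mpr ⟨Finset.mem_univ _, hM'⟩)⟩

variable {G}

lemma no_edge_unmatched {M : Finset (Fin n × Fin n)} (hM : IsM G M)
    (hmax : ∀ M', IsM G M' → M'.card ≤ M.card) {u v : Fin n}
    (huv : G.Adj u v) (hu : u ∉ mV M) (hv : v ∉ mV M) : False := by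
  have hins : IsM G (insert (u, v) M) := by
    constructor
    · intro p hp
      rcases Finset.mem_insert.mp hp with rfl | hp
      · exact huv
      · exact hM.1 p hp
    · intro p hp q hq hpq
      rcases Finset.mem_insert.mp hp with rfl | hp <;>
        rcases Finset.mem_insert.mp hq with rfl | hq
      · rfl
      · exfalso
        rcases hpq with h | h | h | h
        · exact hu (mem_mV.mpr ⟨q, hq, Or.inl h⟩)
        · exact hu (mem_mV.mpr ⟨q, hq, Or.inr h⟩)
        · exact hv (mem_mV.mpr ⟨q, hq, Or.inl h⟩)
        · exact hv (mem_mV.mpr ⟨q, hq, Or.inr h⟩)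
      · exfalso
        rcases hpq with h | h | h | h
        · exact hu (mem_mV.mpr ⟨p, hp, Or.inl h.symm⟩)
        · exact hv (mem_mV.mpr ⟨p, hp, Or.inl h.symm⟩)
        · exact hu (mem_mV.mpr ⟨p, hp, Or.inr h.symm⟩)
        · exact hv (mem_mV.mpr ⟨p, hp, Or.inr h.symm⟩)
      · exact hM.2 p hp q hq hpq
  have hni : (u, v) ∉ M := fun hmem => hu (mem_mV.mpr ⟨(u, v), hmem, Or.inl rfl⟩)
  have := hmax _ hins
  rw [Finset.card_insert_of_notMem hni] at this
  omega

lemma unmatched_nbr (h : ∀ v, ∃ u, G.Adj u v) {M : Finset (Fin n × Fin n)} (hM : IsM G M)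
    (hmax : ∀ M', IsM G M' → M'.card ≤ M.card) (v : Fin n) (hv : v ∉ mV M) :
    ∃ u ∈ mV M, G.Adj u v := by
  obtain ⟨u, hadj⟩ := h v
  by_cases hu : u ∈ mV M
  · exact ⟨u, hu, hadj⟩
  · exact absurd (no_edge_unmatched hM hmax hadj hu hv) (by simp)

lemma no_augment {M : Finset (Fin n × Fin n)} (hM : IsM G M)
    (hmax : ∀ M', IsM G M' → M'.card ≤ M.card) {p : Fin n × Fin n} {y v : Fin n}
    (hp : p ∈ M) (hy : y ∉ mV M) (hv : v ∉ mV M) (hyv : y ≠ v)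
    (h1 : G.Adj p.1 y) (h2 : G.Adj p.2 v) : False := by
  have hp12 : p.1 ≠ p.2 := (hM.1 p hp).ne
  have hp1y : p.1 ≠ y := h1.ne
  have hp2v : p.2 ≠ v := h2.ne
  have hp1v : p.1 ≠ v := fun he => hv (he ▸ mem_mV.mpr ⟨p, hp, Or.inl rfl⟩)
  have hp2y : p.2 ≠ y := fun he => hy (he ▸ mem_mV.mpr ⟨p, hp, Or.inr rfl⟩)
  have key : ∀ q ∈ M.erase p, p.1 ≠ q.1 ∧ p.1 ≠ q.2 ∧ p.2 ≠ q.1 ∧ p.2 ≠ q.2 ∧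
      y ≠ q.1 ∧ y ≠ q.2 ∧ v ≠ q.1 ∧ v ≠ q.2 := by
    intro q hq
    have hqM : q ∈ M := Finset.mem_of_mem_erase hq
    have hqp : q ≠ p := Finset.ne_of_mem_erase hq
    refine ⟨?_, ?_, ?_, ?_, ?_, ?_, ?_, ?_⟩
    · exact fun he => hqp (hM.2 p hp q hqM (Or.inl he)).symm
    · exact fun he => hqp (hM.2 p hp q hqM (Or.inr (Or.inl he))).symm
    · exact fun he => hqp (hM.2 p hp q hqM (Or.inr (Or.inr (Or.inl he)))).symm
    · exact fun he => hqp (hM.2 p hp q hqM (Or.inr (Or.inr (Or.inr he)))).symm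
    · exact fun he => hy (mem_mV.mpr ⟨q, hqM, Or.inl he⟩)
    · exact fun he => hy (mem_mV.mpr ⟨q, hqM, Or.inr he⟩)
    · exact fun he => hv (mem_mV.mpr ⟨q, hqM, Or.inl he⟩)
    · exact fun he => hv (mem_mV.mpr ⟨q, hqM, Or.inr he⟩)
  set M' : Finset (Fin n × Fin n) := insert (p.1, y) (insert (p.2, v) (M.erase p)) with hM'
  have hins : IsM G M' := by
    constructor
    · intro q hq
      rcases Finset.mem_insert.mp hq with rfl | hq
      · exact h1
      rcases Finset.mem_insert.mp hq with rfl | hq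
      · exact h2
      · exact hM.1 q (Finset.mem_of_mem_erase hq)
    · intro a ha b hb hab
      rcases Finset.mem_insert.mp ha with rfl | ha <;>
        [skip; rcases Finset.mem_insert.mp ha with rfl | ha] <;>
        (rcases Finset.mem_insert.mp hb with rfl | hb <;>
          [skip; rcases Finset.mem_insert.mp hb with rfl | hb])
      · rfl
      · exfalso; rcases hab with h | h | h | h <;> simp_all
      · exfalso; obtain ⟨k1, k2, k3, k4, k5, k6, k7, k8⟩ := key b hb
        rcases hab with h | h | h | h <;> simp_all
      · exfalso; rcases hab with h | h | h | h <;> simp_all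
      · rfl
      · exfalso; obtain ⟨k1, k2, k3, k4, k5, k6, k7, k8⟩ := key b hb
        rcases hab with h | h | h | h <;> simp_all
      · exfalso; obtain ⟨k1, k2, k3, k4, k5, k6, k7, k8⟩ := key a ha
        rcases hab with h | h | h | h <;> simp_all
      · exfalso; obtain ⟨k1, k2, k3, k4, k5, k6, k7, k8⟩ := key a ha
        rcases hab with h | h | h | h <;> simp_all
      · exact hM.2 a (Finset.mem_of_mem_erase ha) b (Finset.mem_of_mem_erase hb) hab
  have hc1 : (p.2, v) ∉ M.erase p := fun hmem =>
    hv (mem_mV.mpr ⟨(p.2, v), Finset.mem_of_mem_erase hmem, Or.inr rfl⟩)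
  have hc2 : (p.1, y) ∉ insert (p.2, v) (M.erase p) := by
    intro hmem
    rcases Finset.mem_insert.mp hmem with he | hmem
    · exact hp12 (congrArg Prod.fst he)
    · exact hy (mem_mV.mpr ⟨(p.1, y), Finset.mem_of_mem_erase hmem, Or.inr rfl⟩)
  have hcard := hmax _ hins
  rw [hM', Finset.card_insert_of_notMem hc2, Finset.card_insert_of_notMem hc1,
    Finset.card_erase_of_mem hp] at hcard
  have hMpos : 0 < M.card := Finset.card_pos.mpr ⟨p, hp⟩
  omega

noncomputable def dSet (G : SimpleGraph (Fin n)) (M : Finset (Fin n × Fin n)) : Finset (Fin n) :=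
  M.image fun p => if ∃ z, z ∉ mV M ∧ G.Adj p.1 z then p.1 else p.2

lemma dSet_dom (h : ∀ v, ∃ u, G.Adj u v) {M : Finset (Fin n × Fin n)} (hM : IsM G M)
    (hmax : ∀ M', IsM G M' → M'.card ≤ M.card) : IsDomSet G (dSet G M) := by
  intro v hvD
  set d : Fin n × Fin n → Fin n := fun p => if ∃ z, z ∉ mV M ∧ G.Adj p.1 z then p.1 else p.2
    with hd
  have hdmem : ∀ p ∈ M, d p ∈ dSet G M := fun p hp => Finset.mem_image_of_mem d hp
  have hdor : ∀ p, d p = p.1 ∨ d p = p.2 := by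
    intro p; rw [hd]; dsimp only; split <;> simp
  by_cases hv : v ∈ mV M
  · obtain ⟨p, hp, hvp⟩ := mem_mV.mp hv
    rcases hvp with rfl | rfl
    · rcases hdor p with hdp | hdp
      · exact absurd (hdp ▸ hdmem p hp) hvD
      · exact ⟨d p, hdmem p hp, hdp ▸ (hM.1 p hp).symm⟩
    · rcases hdor p with hdp | hdp
      · exact ⟨d p, hdmem p hp, hdp ▸ (hM.1 p hp)⟩
      · exact absurd (hdp ▸ hdmem p hp) hvD
  · obtain ⟨u, hu, hadj⟩ := unmatched_nbr h hM hmax v hv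
    obtain ⟨p, hp, hup⟩ := mem_mV.mp hu
    rcases hup with rfl | rfl
    · -- u = p.1 : condition holds with z = v
      have hcond : ∃ z, z ∉ mV M ∧ G.Adj p.1 z := ⟨v, hv, hadj⟩
      have hdp : d p = p.1 := by rw [hd]; dsimp only; rw [if_pos hcond]
      exact ⟨d p, hdmem p hp, hdp ▸ hadj⟩
    · -- u = p.2
      by_cases hcond : ∃ z, z ∉ mV M ∧ G.Adj p.1 z
      · obtain ⟨z, hz, hadjz⟩ := hcond
        by_cases hzv : z = v
        · have hdp : d p = p.1 := by rw [hd]; dsimp only; rw [if_pos ⟨z, hz, hadjz⟩]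
          exact ⟨d p, hdmem p hp, hdp ▸ (hzv ▸ hadjz)⟩
        · exact absurd (no_augment hM hmax hp hz hv hzv hadjz hadj) (by simp)
      · have hdp : d p = p.2 := by rw [hd]; dsimp only; rw [if_neg hcond]
        exact ⟨d p, hdmem p hp, hdp ▸ hadj⟩

section Anchored
variable (h : ∀ v, ∃ u, G.Adj u v) {M : Finset (Fin n × Fin n)} (hM : IsM G M)
  (hmax : ∀ M', IsM G M' → M'.card ≤ M.card)

/-- anchor: itself if matched, else a matched neighbour -/
noncomputable def anc (v : Fin n) : Fin n :=
  if hv : v ∈ mV M then v else Classical.choose (unmatched_nbr h hM hmax v hv)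

lemma anc_mem (v : Fin n) : anc h hM hmax v ∈ mV M := by
  unfold anc
  split
  · assumption
  · exact (Classical.choose_spec (unmatched_nbr h hM hmax v (by assumption))).1

lemma anc_matched {v : Fin n} (hv : v ∈ mV M) : anc h hM hmax v = v := dif_pos hv

lemma anc_adj {v : Fin n} (hv : v ∉ mV M) : G.Adj (anc h hM hmax v) v := by
  unfold anc
  rw [dif_neg hv]
  exact (Classical.choose_spec (unmatched_nbr h hM hmax v hv)).2

/-- the matched pair containing the anchor of `v` -/
noncomputable def pr (v : Fin n) : Fin n × Fin n :=
  Classical.choose (mem_mV.mp (anc_mem h hM hmax v))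

lemma pr_mem (v : Fin n) : pr h hM hmax v ∈ M :=
  (Classical.choose_spec (mem_mV.mp (anc_mem h hM hmax v))).1

lemma anc_pr (v : Fin n) :
    anc h hM hmax v = (pr h hM hmax v).1 ∨ anc h hM hmax v = (pr h hM hmax v).2 :=
  (Classical.choose_spec (mem_mV.mp (anc_mem h hM hmax v))).2

include hM in
lemma pr_unique {v : Fin n} {q : Fin n × Fin n} (hq : q ∈ M)
    (hvq : anc h hM hmax v = q.1 ∨ anc h hM hmax v = q.2) : pr h hM hmax v = q := by
  have h1 := pr_mem h hM hmax v
  have h2 := anc_pr h hM hmax v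
  apply hM.2 _ h1 _ hq
  rcases h2 with h2 | h2 <;> rcases hvq with h3 | h3 <;> rw [← h2, ← h3] <;> tauto

lemma pr_fst {q : Fin n × Fin n} (hq : q ∈ M) : pr h hM hmax q.1 = q := by
  apply pr_unique h hM hmax hq
  rw [anc_matched h hM hmax (mem_mV.mpr ⟨q, hq, Or.inl rfl⟩)]
  exact Or.inl rfl

lemma pr_snd {q : Fin n × Fin n} (hq : q ∈ M) : pr h hM hmax q.2 = q := by
  apply pr_unique h hM hmax hq
  rw [anc_matched h hM hmax (mem_mV.mpr ⟨q, hq, Or.inr rfl⟩)]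
  exact Or.inr rfl

lemma pr_anc (v : Fin n) : pr h hM hmax (anc h hM hmax v) = pr h hM hmax v := by
  apply pr_unique h hM hmax (pr_mem h hM hmax v)
  rw [anc_matched h hM hmax (anc_mem h hM hmax v)]
  exact anc_pr h hM hmax v

/-- sign -/
noncomputable def sg (v : Fin n) : ℝ :=
  (if anc h hM hmax v = (pr h hM hmax v).1 then 1 else -1) * (if v ∈ mV M then 1 else -1)

lemma sg_sq (v : Fin n) : sg h hM hmax v * sg h hM hmax v = 1 := by
  unfold sg
  split <;> split <;> norm_num

/-- the designated neighbour of `v` in the star forest -/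
noncomputable def par (v : Fin n) : Fin n :=
  if v ∈ mV M then
    (if v = (pr h hM hmax v).1 then (pr h hM hmax v).2 else (pr h hM hmax v).1)
  else anc h hM hmax v

lemma par_matched {v : Fin n} (hv : v ∈ mV M) :
    par h hM hmax v =
      (if v = (pr h hM hmax v).1 then (pr h hM hmax v).2 else (pr h hM hmax v).1) := by
  unfold par; rw [if_pos hv]

lemma par_unmatched {v : Fin n} (hv : v ∉ mV M) : par h hM hmax v = anc h hM hmax v := by
  unfold par; rw [if_neg hv]

lemma sg_matched {v : Fin n} (hv : v ∈ mV M) :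
    sg h hM hmax v = if v = (pr h hM hmax v).1 then 1 else -1 := by
  unfold sg
  rw [anc_matched h hM hmax hv, if_pos hv, mul_one]

lemma sg_unmatched {v : Fin n} (hv : v ∉ mV M) :
    sg h hM hmax v = (if anc h hM hmax v = (pr h hM hmax v).1 then 1 else -1) * (-1) := by
  unfold sg
  rw [if_neg hv]

lemma matched_or {v : Fin n} (hv : v ∈ mV M) :
    v = (pr h hM hmax v).1 ∨ v = (pr h hM hmax v).2 := by
  have h2 := anc_pr h hM hmax v
  rwa [anc_matched h hM hmax hv] at h2

lemma par_adj (v : Fin n) : G.Adj v (par h hM hmax v) := by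
  by_cases hv : v ∈ mV M
  · rw [par_matched h hM hmax hv]
    set P := pr h hM hmax v with hP
    have hadj : G.Adj P.1 P.2 := hM.1 _ (pr_mem h hM hmax v)
    have h2 := matched_or h hM hmax hv
    by_cases h3 : v = P.1
    · rw [if_pos h3, h3]; exact hadj
    · rw [if_neg h3]
      have h4 : v = P.2 := by tauto
      rw [h4]; exact hadj.symm
  · rw [par_unmatched h hM hmax hv]
    exact (anc_adj h hM hmax hv).symm

lemma pr_par (v : Fin n) : pr h hM hmax (par h hM hmax v) = pr h hM hmax v := by
  by_cases hv : v ∈ mV M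
  · rw [par_matched h hM hmax hv]
    split
    · exact pr_snd h hM hmax (pr_mem h hM hmax v)
    · exact pr_fst h hM hmax (pr_mem h hM hmax v)
  · rw [par_unmatched h hM hmax hv]
    exact pr_anc h hM hmax v

lemma mem_fst {v : Fin n} : (pr h hM hmax v).1 ∈ mV M :=
  mem_mV.mpr ⟨_, pr_mem h hM hmax v, Or.inl rfl⟩

lemma mem_snd {v : Fin n} : (pr h hM hmax v).2 ∈ mV M :=
  mem_mV.mpr ⟨_, pr_mem h hM hmax v, Or.inr rfl⟩

lemma sg_par (v : Fin n) : sg h hM hmax (par h hM hmax v) = - sg h hM hmax v := by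
  have hpm := pr_mem h hM hmax v
  have hne : (pr h hM hmax v).1 ≠ (pr h hM hmax v).2 := (hM.1 _ hpm).ne
  by_cases hv : v ∈ mV M
  · have h2 := matched_or h hM hmax hv
    rw [par_matched h hM hmax hv, sg_matched h hM hmax hv]
    by_cases h3 : v = (pr h hM hmax v).1
    · rw [if_pos h3, if_pos h3, sg_matched h hM hmax (mem_snd h hM hmax),
        pr_snd h hM hmax hpm, if_neg (Ne.symm hne)]
    · have h4 : v = (pr h hM hmax v).2 := by tauto
      rw [if_neg h3, if_neg h3, sg_matched h hM hmax (mem_fst h hM hmax),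
        pr_fst h hM hmax hpm, if_pos rfl]
      norm_num
  · rw [par_unmatched h hM hmax hv, sg_unmatched h hM hmax hv,
      sg_matched h hM hmax (anc_mem h hM hmax v), pr_anc h hM hmax v]
    by_cases hc : anc h hM hmax v = (pr h hM hmax v).1 <;> simp [hc]

lemma sg_fst {q : Fin n × Fin n} (hq : q ∈ M) : sg h hM hmax q.1 = 1 := by
  rw [sg_matched h hM hmax (mem_mV.mpr ⟨q, hq, Or.inl rfl⟩), pr_fst h hM hmax hq, if_pos rfl]

lemma lap_quad_eq' (G : SimpleGraph (Fin n)) (x : Fin n → ℝ) :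
    x ⬝ᵥ (G.lapMatrix ℝ *ᵥ x) =
      (∑ i, ∑ j, if G.Adj i j then (x i - x j)^2 else 0) / 2 := by
  rw [← Matrix.toLinearMap₂'_apply', SimpleGraph.lapMatrix_toLinearMap₂']

noncomputable def wv (p : {q // q ∈ M}) (v : Fin n) : ℝ :=
  if pr h hM hmax v = (p : Fin n × Fin n) then sg h hM hmax v else 0

lemma x_apply (t : {q // q ∈ M} → ℝ) (v : Fin n) :
    (∑ p : {q // q ∈ M}, t p * wv h hM hmax p v)
      = t ⟨pr h hM hmax v, pr_mem h hM hmax v⟩ * sg h hM hmax v := by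
  rw [Fintype.sum_eq_single (⟨pr h hM hmax v, pr_mem h hM hmax v⟩ : {q // q ∈ M})]
  · unfold wv; rw [if_pos rfl]
  · intro q hq
    unfold wv
    rw [if_neg, mul_zero]
    intro he
    exact hq (Subtype.ext he.symm)

lemma x_indep (t : {q // q ∈ M} → ℝ) (ht : t ≠ 0) :
    (fun v => ∑ p : {q // q ∈ M}, t p * wv h hM hmax p v) ≠ 0 := by
  obtain ⟨p, hp⟩ := Function.ne_iff.mp ht
  intro hx
  apply hp
  have := congrFun hx (p : Fin n × Fin n).1
  rw [x_apply] at this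
  have hpr : pr h hM hmax (p : Fin n × Fin n).1 = (p : Fin n × Fin n) := pr_fst h hM hmax p.2
  have hsg : sg h hM hmax (p : Fin n × Fin n).1 = 1 := sg_fst h hM hmax p.2
  rw [hsg, mul_one] at this
  have heq : (⟨pr h hM hmax (p : Fin n × Fin n).1, pr_mem h hM hmax _⟩ : {q // q ∈ M}) = p :=
    Subtype.ext hpr
  rw [heq] at this
  exact this

lemma x_norm (t : {q // q ∈ M} → ℝ) :
    (fun v => ∑ p : {q // q ∈ M}, t p * wv h hM hmax p v) ⬝ᵥ
      (fun v => ∑ p : {q // q ∈ M}, t p * wv h hM hmax p v)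
      = ∑ v, (t ⟨pr h hM hmax v, pr_mem h hM hmax v⟩)^2 := by
  unfold dotProduct
  refine Finset.sum_congr rfl fun v _ => ?_
  dsimp only
  rw [x_apply]
  have := sg_sq h hM hmax v
  nlinarith [this]

lemma x_quad (t : {q // q ∈ M} → ℝ) :
    2 * ((fun v => ∑ p : {q // q ∈ M}, t p * wv h hM hmax p v) ⬝ᵥ
        (fun v => ∑ p : {q // q ∈ M}, t p * wv h hM hmax p v))
      ≤ (fun v => ∑ p : {q // q ∈ M}, t p * wv h hM hmax p v) ⬝ᵥ
        (G.lapMatrix ℝ *ᵥ (fun v => ∑ p : {q // q ∈ M}, t p * wv h hM hmax p v)) := by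
  set x : Fin n → ℝ := fun v => ∑ p : {q // q ∈ M}, t p * wv h hM hmax p v with hx
  rw [lap_quad_eq' G, x_norm]
  have hterm : ∀ v, (x v - x (par h hM hmax v))^2
      = 4 * (t ⟨pr h hM hmax v, pr_mem h hM hmax v⟩)^2 := by
    intro v
    have h1 : x v = t ⟨pr h hM hmax v, pr_mem h hM hmax v⟩ * sg h hM hmax v := x_apply ..
    have h2 : x (par h hM hmax v)
        = t ⟨pr h hM hmax v, pr_mem h hM hmax v⟩ * (- sg h hM hmax v) := by
      rw [hx]
      dsimp only
      rw [x_apply]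
      have heq : (⟨pr h hM hmax (par h hM hmax v), pr_mem h hM hmax _⟩ : {q // q ∈ M})
          = ⟨pr h hM hmax v, pr_mem h hM hmax v⟩ := Subtype.ext (pr_par h hM hmax v)
      rw [heq, sg_par]
    rw [h1, h2]
    have := sg_sq h hM hmax v
    nlinarith [this]
  have hrow : ∀ u, (x u - x (par h hM hmax u))^2
      ≤ ∑ v, if G.Adj u v then (x u - x v)^2 else 0 := by
    intro u
    have hs := Finset.single_le_sum (f := fun v => if G.Adj u v then (x u - x v)^2 else 0)
      (fun i _ => by positivity) (Finset.mem_univ (par h hM hmax u))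
    rwa [if_pos (par_adj h hM hmax u)] at hs
  have hsum : ∑ u, (x u - x (par h hM hmax u))^2
      ≤ ∑ u, ∑ v, if G.Adj u v then (x u - x v)^2 else 0 :=
    Finset.sum_le_sum fun u _ => hrow u
  rw [Finset.sum_congr rfl (fun u _ => hterm u), ← Finset.mul_sum] at hsum
  linarith
end Anchored

end Aux

/-- Theorem 2: if $G$ is isolate-free then $\gamma(G) \le m_G[2,n]$. -/
theorem domNum_le_mCount_Icc_two_n {n : ℕ} (G : SimpleGraph (Fin n))
    (h : ∀ v, ∃ u, G.Adj u v) :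
    domNum G ≤ mCount G (fun x => 2 ≤ x ∧ x ≤ (n : ℝ)) := by
  obtain ⟨M, hM, hmax⟩ := exists_max_matching G
  have h1 : domNum G ≤ (dSet G M).card :=
    Nat.sInf_le ⟨dSet G M, dSet_dom h hM hmax, rfl⟩
  have h2 : (dSet G M).card ≤ M.card := Finset.card_image_le
  have hcount := card_le_count_eigen (G.lapMatrix ℝ)
      (G.posSemidef_lapMatrix (R := ℝ)).isHermitian 2 (wv h hM hmax)
      (x_indep h hM hmax) (fun t => x_quad h hM hmax t)
  rw [Fintype.card_coe] at hcount
  have h3 : (Finset.univ.filter fun i =>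
        (2:ℝ) ≤ (G.posSemidef_lapMatrix (R := ℝ)).isHermitian.eigenvalues i).card
      = mCount G (fun x => 2 ≤ x ∧ x ≤ (n : ℝ)) := by
    unfold mCount lapEig
    apply congrArg
    ext i
    simp only [Finset.mem_filter, Finset.mem_univ, true_and]
    constructor
    · intro h'
      exact ⟨h', lapEig_le G i⟩
    · intro h'
      exact h'.1
  omega
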